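/- Let Ξ: A → U be a random function between finite nonempty sets. Then Ξ is invertible if and only if Ξ separates A (i.e., the variational distance d(a,b) is strictly positive for every pair of distinct a, b ∈ A). -/

import Mathlib

open Finset

/-- A random function `Ξ : A → U` between finite nonempty sets,
given by the distributions `p a` on `U`, is invertible (there is an independent
random function `Γ : U → A`, given by distributions `g u` on `A`, such that
`P[γ_{ξ_a} = a] > P[γ_{ξ_a} = x]` for every `a` and every `x ≠ a`) if and only if
`Ξ` separates `A` (the variational distance of `p a` and `p b` is positive for all
distinct `a, b`). -/
theorem stmt0 {A U : Type*} [Fintype A] [Fintype U] [Nonempty A] [Nonempty U]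
    (p : A → U → ℝ) (hp0 : ∀ a u, 0 ≤ p a u) (hp1 : ∀ a, ∑ u, p a u = 1) :
    (∃ g : U → A → ℝ, (∀ u x, 0 ≤ g u x) ∧ (∀ u, ∑ x, g u x = 1) ∧
        ∀ a x, x ≠ a → ∑ u, p a u * g u x < ∑ u, p a u * g u a) ↔
      (∀ a b : A, a ≠ b → 0 < ∑ u, |p a u - p b u|) := by
  constructor
  · rintro ⟨g, hg0, hg1, hg⟩ a b hab
    by_contra h
    push_neg at h
    have hsum0 : ∑ u, |p a u - p b u| = 0 :=
      le_antisymm h (Finset.sum_nonneg fun u _ => abs_nonneg _)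
    have heq : ∀ u, p a u = p b u := by
      intro u
      have h0 := (Finset.sum_eq_zero_iff_of_nonneg (fun u _ => abs_nonneg _)).1 hsum0 u
        (mem_univ u)
      have := abs_eq_zero.1 h0
      linarith
    have h1 := hg a b (Ne.symm hab)
    have h2 := hg b a hab
    have e1 : ∑ u, p a u * g u b = ∑ u, p b u * g u b :=
      Finset.sum_congr rfl fun u _ => by rw [heq u]
    have e2 : ∑ u, p a u * g u a = ∑ u, p b u * g u a :=
      Finset.sum_congr rfl fun u _ => by rw [heq u]
    linarith
  · intro hd
    set n : ℝ := (Fintype.card A : ℝ) with hn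
    have hnpos : (0 : ℝ) < n := by
      rw [hn]; exact_mod_cast Fintype.card_pos
    have hple : ∀ x u, p x u ≤ 1 := by
      intro x u
      calc p x u ≤ ∑ v, p x v :=
            Finset.single_le_sum (fun v _ => hp0 x v) (mem_univ u)
        _ = 1 := hp1 x
    set Q : A → ℝ := fun x => ∑ v, (p x v) ^ 2 with hQdef
    have hQ0 : ∀ x, 0 ≤ Q x := fun x => Finset.sum_nonneg fun v _ => sq_nonneg _
    have hQ1 : ∀ x, Q x ≤ 1 := by
      intro x
      calc Q x ≤ ∑ v, p x v :=
            Finset.sum_le_sum fun v _ => by nlinarith [hp0 x v, hple x v]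
        _ = 1 := hp1 x
    set ψ : U → A → ℝ := fun u x => 2 * p x u - Q x with hψdef
    have hψlb : ∀ u x, -1 ≤ ψ u x := fun u x => by
      show -1 ≤ 2 * p x u - Q x
      nlinarith [hp0 x u, hQ1 x]
    have hψub : ∀ u x, ψ u x ≤ 2 := fun u x => by
      show 2 * p x u - Q x ≤ 2
      nlinarith [hple x u, hQ0 x]
    set S : U → ℝ := fun u => ∑ y, ψ u y with hSdef
    have hSub : ∀ u, S u ≤ 2 * n := by
      intro u
      have h := Finset.sum_le_sum fun y (_ : y ∈ univ) => hψub u y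
      have h2 : ∑ _y : A, (2 : ℝ) = 2 * n := by
        rw [Finset.sum_const, card_univ, nsmul_eq_mul, ← hn]; ring
      calc S u = ∑ y, ψ u y := rfl
        _ ≤ ∑ _y : A, (2 : ℝ) := h
        _ = 2 * n := h2
    refine ⟨fun u x => 1 / n + 1 / (6 * n) * (ψ u x - S u / n), ?_, ?_, ?_⟩
    · intro u x
      show 0 ≤ 1 / n + 1 / (6 * n) * (ψ u x - S u / n)
      have h1 : S u / n ≤ 2 := by
        rw [div_le_iff₀ hnpos]; linarith [hSub u]
      have h2 : -3 ≤ ψ u x - S u / n := by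
        have h3 := hψlb u x
        have h4 := sub_le_sub h3 h1
        exact le_trans (by norm_num) h4
      have h6 : (1 : ℝ) / n = 6 * (1 / (6 * n)) := by field_simp
      have hc : 0 < 1 / (6 * n) := by positivity
      nlinarith [mul_le_mul_of_nonneg_left h2 hc.le]
    · intro u
      show ∑ x, (1 / n + 1 / (6 * n) * (ψ u x - S u / n)) = 1
      have step1 : ∑ _x : A, (1 / n : ℝ) = 1 := by
        rw [Finset.sum_const, card_univ, nsmul_eq_mul, ← hn]; field_simp
      have step2 : ∑ x, (ψ u x - S u / n) = 0 := by
        rw [Finset.sum_sub_distrib, Finset.sum_const, card_univ, nsmul_eq_mul, ← hn]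
        have hsum : ∑ x, ψ u x = S u := rfl
        rw [hsum]; field_simp; ring
      rw [Finset.sum_add_distrib, ← Finset.mul_sum, step1, step2, mul_zero, add_zero]
    · intro a x hxa
      show ∑ u, p a u * (1 / n + 1 / (6 * n) * (ψ u x - S u / n))
          < ∑ u, p a u * (1 / n + 1 / (6 * n) * (ψ u a - S u / n))
      have key : ∑ u, p a u * (1 / n + 1 / (6 * n) * (ψ u a - S u / n))
          - ∑ u, p a u * (1 / n + 1 / (6 * n) * (ψ u x - S u / n))
          = 1 / (6 * n) * ∑ u, (p a u - p x u) ^ 2 := by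
        rw [← Finset.sum_sub_distrib]
        have step : ∀ u, p a u * (1 / n + 1 / (6 * n) * (ψ u a - S u / n))
            - p a u * (1 / n + 1 / (6 * n) * (ψ u x - S u / n))
            = 1 / (6 * n) * (p a u * (2 * p a u - 2 * p x u)
                - p a u * Q a + p a u * Q x) := by
          intro u
          have ha : ψ u a = 2 * p a u - Q a := rfl
          have hx : ψ u x = 2 * p x u - Q x := rfl
          rw [ha, hx]; ring
        rw [Finset.sum_congr rfl fun u _ => step u, ← Finset.mul_sum]
        congr 1
        have e1 : ∑ u, p a u * (2 * p a u - 2 * p x u)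
            = 2 * Q a - 2 * ∑ u, p a u * p x u := by
          have hq : Q a = ∑ v, (p a v) ^ 2 := rfl
          rw [hq, Finset.mul_sum, Finset.mul_sum, ← Finset.sum_sub_distrib]
          exact Finset.sum_congr rfl fun u _ => by ring
        have e2 : ∑ u, p a u * Q a = Q a := by
          rw [← Finset.sum_mul, hp1, one_mul]
        have e3 : ∑ u, p a u * Q x = Q x := by
          rw [← Finset.sum_mul, hp1, one_mul]
        have e4 : ∑ u, (p a u - p x u) ^ 2
            = Q a - 2 * ∑ u, p a u * p x u + Q x := by
          have hqa : Q a = ∑ v, (p a v) ^ 2 := rfl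
          have hqx : Q x = ∑ v, (p x v) ^ 2 := rfl
          rw [hqa, hqx, Finset.mul_sum, ← Finset.sum_sub_distrib,
            ← Finset.sum_add_distrib]
          exact Finset.sum_congr rfl fun u _ => by ring
        calc ∑ u, (p a u * (2 * p a u - 2 * p x u) - p a u * Q a + p a u * Q x)
            = (∑ u, (p a u * (2 * p a u - 2 * p x u) - p a u * Q a))
              + ∑ u, p a u * Q x := by rw [Finset.sum_add_distrib]
          _ = (∑ u, p a u * (2 * p a u - 2 * p x u)) - (∑ u, p a u * Q a)
              + ∑ u, p a u * Q x := by rw [Finset.sum_sub_distrib]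
          _ = Q a - 2 * (∑ u, p a u * p x u) + Q x := by rw [e1, e2, e3]; ring
          _ = ∑ u, (p a u - p x u) ^ 2 := e4.symm
      have hpos : 0 < ∑ u, (p a u - p x u) ^ 2 := by
        have hd' := hd a x (Ne.symm hxa)
        obtain ⟨u, hu⟩ : ∃ u, p a u ≠ p x u := by
          by_contra hc
          push_neg at hc
          have : ∑ u, |p a u - p x u| = 0 :=
            Finset.sum_eq_zero fun u _ => by rw [hc u]; simp
          linarith
        exact Finset.sum_pos' (fun u _ => sq_nonneg _)
          ⟨u, mem_univ u, pow_two_pos_of_ne_zero (sub_ne_zero.mpr hu)⟩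
      have hε : 0 < 1 / (6 * n) := by positivity
      nlinarith [key, mul_pos hε hpos]
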